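/- If r, s are independent random variables each with density f(x) = 4x·exp(−2x²) on [0,∞), then η = r − s has probability density R(η) = (1/2)[2|η| + √π·e^{η²}·(1−2η²)·(1−erf(|η|))]·e^{−2η²} on ℝ. -/

import Mathlib

open MeasureTheory Real Set ProbabilityTheory Filter
open scoped ENNReal

/-- The error function. -/
noncomputable def erf (x : ℝ) : ℝ := (2 / Real.sqrt π) * ∫ t in (0:ℝ)..x, Real.exp (-t ^ 2)

lemma integrable_gauss1 : MeasureTheory.Integrable (fun t : ℝ => Real.exp (-t ^ 2)) := by
  have := integrable_exp_neg_mul_sq (b := 1) one_pos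
  simpa using this

lemma hasDerivAt_erf (x : ℝ) : HasDerivAt erf (2 / Real.sqrt π * Real.exp (-x ^ 2)) x := by
  have hc : Continuous fun t : ℝ => Real.exp (-t ^ 2) := by continuity
  have h := intervalIntegral.integral_hasDerivAt_right (f := fun t : ℝ => Real.exp (-t ^ 2))
    (a := 0) (b := x) (integrable_gauss1.intervalIntegrable)
    (hc.stronglyMeasurable.stronglyMeasurableAtFilter) hc.continuousAt
  exact h.const_mul (2 / Real.sqrt π)

lemma tendsto_erf : Tendsto erf atTop (nhds 1) := by
  have h0 : IntegrableOn (fun t : ℝ => Real.exp (-t ^ 2)) (Ioi 0) := integrable_gauss1.integrableOn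
  have h := intervalIntegral_tendsto_integral_Ioi 0 h0 tendsto_id
  have hI : ∫ t in Ioi (0:ℝ), Real.exp (-t ^ 2) = Real.sqrt π / 2 := by
    have := integral_gaussian_Ioi 1
    simpa using this
  rw [hI] at h
  have h2 := h.const_mul (2 / Real.sqrt π)
  have hπ : Real.sqrt π ≠ 0 := by positivity
  have h3 : Tendsto erf atTop (nhds (2 / Real.sqrt π * (Real.sqrt π / 2))) := h2
  convert h3 using 2
  field_simp

noncomputable def Hfun (η x : ℝ) : ℝ :=
  -2 * Real.exp (-η^2) * ((x - η/2) * Real.exp (-4*(x - η/2)^2))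
  + (2 - 4*η^2) * Real.exp (-η^2) * (Real.sqrt π / 4) * erf (2*x - η)

lemma hasDerivAt_Hfun (η x : ℝ) :
    HasDerivAt (Hfun η) (16*x*(x-η)*Real.exp (-2*x^2 - 2*(x-η)^2)) x := by
  have hπ : Real.sqrt π ≠ 0 := by positivity
  have ha : HasDerivAt (fun x : ℝ => x - η/2) 1 x := (hasDerivAt_id x).sub_const _
  have hb : HasDerivAt (fun x : ℝ => -4*(x - η/2)^2) (-8*(x - η/2)) x := by
    have := ((ha.pow 2).const_mul (-4 : ℝ))
    refine this.congr_deriv ?_; ring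
  have hc : HasDerivAt (fun x : ℝ => Real.exp (-4*(x - η/2)^2))
      (Real.exp (-4*(x - η/2)^2) * (-8*(x - η/2))) x := hb.exp
  have h1 := (ha.mul hc).const_mul (-2 * Real.exp (-η^2))
  have ha2 : HasDerivAt (fun x : ℝ => 2*x - η) 2 x := by
    simpa using ((hasDerivAt_id x).const_mul (2:ℝ)).sub_const η
  have h2 := ((hasDerivAt_erf (2*x - η)).comp x ha2).const_mul
    ((2 - 4*η^2) * Real.exp (-η^2) * (Real.sqrt π / 4))
  have h := h1.add h2
  refine h.congr_deriv ?_
  have e1 : -2*x^2 - 2*(x-η)^2 = (-η^2) + (-4*(x - η/2)^2) := by ring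
  have e2 : -(2*x - η)^2 = -4*(x - η/2)^2 := by ring
  rw [e1, e2, Real.exp_add]
  field_simp
  ring

lemma tendsto_Hfun (η : ℝ) :
    Tendsto (Hfun η) atTop (nhds ((2 - 4*η^2) * Real.exp (-η^2) * (Real.sqrt π / 4))) := by
  have key : Tendsto (fun y : ℝ => y * Real.exp (-4*y^2)) atTop (nhds 0) := by
    have hb : Tendsto (fun y : ℝ => y * Real.exp (-y)) atTop (nhds 0) := by
      simpa using Real.tendsto_pow_mul_exp_neg_atTop_nhds_zero 1
    apply tendsto_of_tendsto_of_tendsto_of_le_of_le' tendsto_const_nhds hb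
    · filter_upwards [eventually_ge_atTop (0:ℝ)] with y hy
      positivity
    · filter_upwards [eventually_ge_atTop (1:ℝ)] with y hy
      have : -4*y^2 ≤ -y := by nlinarith
      exact mul_le_mul_of_nonneg_left (Real.exp_le_exp.2 this) (by linarith)
  have h1 : Tendsto (fun x : ℝ => -2 * Real.exp (-η^2) * ((x - η/2) * Real.exp (-4*(x - η/2)^2)))
      atTop (nhds 0) := by
    have := (key.comp (tendsto_atTop_add_const_right atTop (-(η/2)) tendsto_id)).const_mul
      (-2 * Real.exp (-η^2))
    simpa [Function.comp_def, sub_eq_add_neg] using this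
  have h2 : Tendsto (fun x : ℝ => (2 - 4*η^2) * Real.exp (-η^2) * (Real.sqrt π / 4) * erf (2*x - η))
      atTop (nhds ((2 - 4*η^2) * Real.exp (-η^2) * (Real.sqrt π / 4))) := by
    have ht : Tendsto (fun x : ℝ => 2*x - η) atTop atTop := by
      apply tendsto_atTop_add_const_right
      exact tendsto_id.const_mul_atTop two_pos
    have := (tendsto_erf.comp ht).const_mul ((2 - 4*η^2) * Real.exp (-η^2) * (Real.sqrt π / 4))
    simpa using this
  have h := h1.add h2
  rw [show (2 - 4*η^2) * Real.exp (-η^2) * (Real.sqrt π / 4)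
    = 0 + (2 - 4*η^2) * Real.exp (-η^2) * (Real.sqrt π / 4) by ring]
  exact h

noncomputable def R0 (η : ℝ) : ℝ :=
  (1 / 2) * (2 * |η| + Real.sqrt π * Real.exp (η ^ 2) * (1 - 2 * η ^ 2) * (1 - erf |η|)) *
    Real.exp (-2 * η ^ 2)

lemma integrand_nonneg {η x : ℝ} (hx : x ∈ Ioi η) (hη : 0 ≤ η) :
    0 ≤ 16*x*(x-η)*Real.exp (-2*x^2 - 2*(x-η)^2) := by
  have h1 : (0:ℝ) ≤ x := le_trans hη (le_of_lt hx)
  have h2 : (0:ℝ) ≤ x - η := by simp at hx; linarith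
  positivity

lemma key_integrableOn {η : ℝ} (hη : 0 ≤ η) :
    IntegrableOn (fun x => 16*x*(x-η)*Real.exp (-2*x^2 - 2*(x-η)^2)) (Ioi η) :=
  integrableOn_Ioi_deriv_of_nonneg' (fun x _ => hasDerivAt_Hfun η x)
    (fun x hx => integrand_nonneg hx hη) (tendsto_Hfun η)

lemma key_integral {η : ℝ} (hη : 0 ≤ η) :
    ∫ x in Ioi η, 16*x*(x-η)*Real.exp (-2*x^2 - 2*(x-η)^2) = R0 η := by
  rw [integral_Ioi_of_hasDerivAt_of_nonneg' (fun x _ => hasDerivAt_Hfun η x)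
    (fun x hx => integrand_nonneg hx hη) (tendsto_Hfun η)]
  rw [R0, Hfun, abs_of_nonneg hη]
  have e1 : Real.exp (-2*η^2) = Real.exp (-η^2) * Real.exp (-η^2) := by
    rw [← Real.exp_add]; ring_nf
  have e2 : Real.exp (η^2) * Real.exp (-2*η^2) = Real.exp (-η^2) := by
    rw [← Real.exp_add]; ring_nf
  have e3 : -4*(η - η/2)^2 = -η^2 := by ring
  have e4 : 2*η - η = η := by ring
  rw [e3, e4]
  linear_combination (-η) * e1 + (-(Real.sqrt π/2)*(1-2*η^2)*(1-erf η)) * e2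

noncomputable def f0 (x : ℝ) : ℝ :=
  Set.indicator (Set.Ici (0 : ℝ)) (fun x => 4 * x * Real.exp (-2 * x ^ 2)) x

lemma f0_nonneg (x : ℝ) : 0 ≤ f0 x := by
  unfold f0
  apply Set.indicator_nonneg
  intro y hy
  have : (0:ℝ) ≤ y := hy
  positivity

lemma f0_measurable : Measurable f0 := by
  unfold f0
  exact (Measurable.indicator (by fun_prop) measurableSet_Ici)

lemma prod_eq {η : ℝ} (hη : 0 ≤ η) (x : ℝ) :
    f0 x * f0 (x - η) =
      (Ioi η).indicator (fun x => 16*x*(x-η)*Real.exp (-2*x^2 - 2*(x-η)^2)) x := by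
  unfold f0
  rcases lt_or_ge η x with hx | hx
  · have h0 : (0:ℝ) ≤ x := le_trans hη hx.le
    have h1 : (0:ℝ) ≤ x - η := by linarith
    rw [Set.indicator_of_mem (by exact h0 : x ∈ Ici (0:ℝ)),
      Set.indicator_of_mem (by exact h1 : x - η ∈ Ici (0:ℝ)),
      Set.indicator_of_mem (by exact hx : x ∈ Ioi η)]
    have : -2*x^2 - 2*(x-η)^2 = (-2*x^2) + (-2*(x-η)^2) := by ring
    rw [this, Real.exp_add]
    ring
  · rw [Set.indicator_of_notMem (by simpa using hx : x ∉ Ioi η)]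
    rcases lt_or_ge x 0 with h0 | h0
    · rw [Set.indicator_of_notMem (by simpa using h0 : x ∉ Ici (0:ℝ))]
      ring
    · rcases eq_or_lt_of_le hx with heq | hlt
      · subst heq; simp
      · rw [Set.indicator_of_notMem (by simp; linarith : x - η ∉ Ici (0:ℝ))]
        ring

lemma R0_neg (η : ℝ) : R0 (-η) = R0 η := by simp [R0, abs_neg, neg_sq]

lemma lint_nonneg_case {η : ℝ} (hη : 0 ≤ η) :
    ∫⁻ x, ENNReal.ofReal (f0 x) * ENNReal.ofReal (f0 (x - η)) = ENNReal.ofReal (R0 η) := by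
  have h1 : ∀ x : ℝ, ENNReal.ofReal (f0 x) * ENNReal.ofReal (f0 (x - η))
      = ENNReal.ofReal (f0 x * f0 (x - η)) :=
    fun x => (ENNReal.ofReal_mul (f0_nonneg x)).symm
  simp_rw [h1, prod_eq hη]
  have hint : Integrable ((Ioi η).indicator
      (fun x => 16*x*(x-η)*Real.exp (-2*x^2 - 2*(x-η)^2))) := by
    rw [integrable_indicator_iff measurableSet_Ioi]
    exact key_integrableOn hη
  rw [← ofReal_integral_eq_lintegral_ofReal hint]
  · rw [integral_indicator measurableSet_Ioi, key_integral hη]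
  · filter_upwards with x
    rw [← prod_eq hη x]
    exact mul_nonneg (f0_nonneg x) (f0_nonneg _)

lemma lint_eq (η : ℝ) :
    ∫⁻ x, ENNReal.ofReal (f0 x) * ENNReal.ofReal (f0 (x - η)) = ENNReal.ofReal (R0 η) := by
  rcases le_or_gt 0 η with hη | hη
  · exact lint_nonneg_case hη
  · have htr := lintegral_add_right_eq_self
      (μ := (volume : Measure ℝ))
      (fun x => ENNReal.ofReal (f0 x) * ENNReal.ofReal (f0 (x - η))) η
    rw [← htr]
    have : ∀ x : ℝ, ENNReal.ofReal (f0 (x + η)) * ENNReal.ofReal (f0 (x + η - η))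
        = ENNReal.ofReal (f0 x) * ENNReal.ofReal (f0 (x - (-η))) := by
      intro x
      rw [mul_comm]
      congr 1 <;> congr 1 <;> ring_nf
    simp_rw [this]
    rw [lint_nonneg_case (by linarith : (0:ℝ) ≤ -η), R0_neg]

noncomputable def g0 (x : ℝ) : ℝ≥0∞ := ENNReal.ofReal (f0 x)
lemma g0_ne_top (x : ℝ) : g0 x ≠ ⊤ := ENNReal.ofReal_ne_top
lemma g0_measurable : Measurable g0 := ENNReal.measurable_ofReal.comp f0_measurable

lemma inner_eq (s : Set ℝ) (hs : MeasurableSet s) (x : ℝ) :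
    (volume.withDensity g0) (Prod.mk x ⁻¹' ((fun p : ℝ × ℝ => p.1 - p.2) ⁻¹' s))
      = ∫⁻ y, s.indicator (fun _ => (1:ℝ≥0∞)) y * g0 (x - y) := by
  have hpre : Prod.mk x ⁻¹' ((fun p : ℝ × ℝ => p.1 - p.2) ⁻¹' s)
      = (fun y => x - y) ⁻¹' s := rfl
  have hms : MeasurableSet ((fun y : ℝ => x - y) ⁻¹' s) :=
    (measurable_const.sub measurable_id) hs
  rw [hpre, withDensity_apply _ hms, ← lintegral_indicator hms]
  have hF : Measurable (fun y => s.indicator (fun _ => (1:ℝ≥0∞)) y * g0 (x - y)) :=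
    (measurable_one.indicator hs).mul
      (g0_measurable.comp (measurable_const.sub measurable_id))
  have hmp := (Measure.measurePreserving_sub_left (volume : Measure ℝ) x).lintegral_comp hF
  calc ∫⁻ y, ((fun y => x - y) ⁻¹' s).indicator g0 y
      = ∫⁻ y, (fun y => s.indicator (fun _ => (1:ℝ≥0∞)) y * g0 (x - y)) (x - y) := by
        congr 1; ext y
        by_cases hy : x - y ∈ s
        · simp [Set.indicator_of_mem, hy, Set.mem_preimage, show x - (x - y) = y by ring]
        · simp [Set.indicator_of_notMem, hy, Set.mem_preimage]
    _ = ∫⁻ y, s.indicator (fun _ => (1:ℝ≥0∞)) y * g0 (x - y) := hmp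

lemma map_sub_prod :
    Measure.map (fun p : ℝ × ℝ => p.1 - p.2)
        ((volume.withDensity g0).prod (volume.withDensity g0)) =
      volume.withDensity (fun η => ∫⁻ x, g0 x * g0 (x - η)) := by
  have hsub : Measurable (fun p : ℝ × ℝ => p.1 - p.2) := measurable_fst.sub measurable_snd
  ext s hs
  rw [Measure.map_apply hsub hs, Measure.prod_apply (hsub hs), withDensity_apply _ hs,
    lintegral_withDensity_eq_lintegral_mul _ g0_measurable
      (measurable_measure_prodMk_left (hsub hs))]
  calc
    ∫⁻ x, (g0 * fun x => (volume.withDensity g0)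
        (Prod.mk x ⁻¹' ((fun p : ℝ × ℝ => p.1 - p.2) ⁻¹' s))) x
      = ∫⁻ x, ∫⁻ y, g0 x * (s.indicator (fun _ => (1:ℝ≥0∞)) y * g0 (x - y)) := by
        congr 1; ext x
        rw [Pi.mul_apply, inner_eq s hs x,
          lintegral_const_mul' _ _ (g0_ne_top x)]
    _ = ∫⁻ y, ∫⁻ x, g0 x * (s.indicator (fun _ => (1:ℝ≥0∞)) y * g0 (x - y)) := by
        apply lintegral_lintegral_swap
        apply Measurable.aemeasurable
        exact (g0_measurable.comp measurable_fst).mul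
          (((measurable_one.indicator hs).comp measurable_snd).mul
            (g0_measurable.comp (measurable_fst.sub measurable_snd)))
    _ = ∫⁻ y, s.indicator (fun _ => (1:ℝ≥0∞)) y * ∫⁻ x, g0 x * g0 (x - y) := by
        congr 1; ext y
        have hind : s.indicator (fun _ => (1:ℝ≥0∞)) y ≠ ⊤ := by
          by_cases hy : y ∈ s <;> simp [hy]
        rw [← lintegral_const_mul' _ _ hind]
        congr 1; ext x; ring
    _ = ∫⁻ y in s, ∫⁻ x, g0 x * g0 (x - y) := by
        rw [← lintegral_indicator hs]
        congr 1; ext y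
        by_cases hy : y ∈ s <;> simp [hy]

theorem stmt_9 {Ω : Type*} [MeasurableSpace Ω] (P : Measure Ω) [IsProbabilityMeasure P]
    (X Y : Ω → ℝ) (hX : Measurable X) (hY : Measurable Y) (hindep : IndepFun X Y P)
    (hXd : Measure.map X P = volume.withDensity (fun x => ENNReal.ofReal
      (Set.indicator (Set.Ici (0 : ℝ)) (fun x => 4 * x * Real.exp (-2 * x ^ 2)) x)))
    (hYd : Measure.map Y P = volume.withDensity (fun x => ENNReal.ofReal
      (Set.indicator (Set.Ici (0 : ℝ)) (fun x => 4 * x * Real.exp (-2 * x ^ 2)) x))) :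
    Measure.map (fun ω => X ω - Y ω) P = volume.withDensity (fun η => ENNReal.ofReal
      ((1 / 2) * (2 * |η| + Real.sqrt π * Real.exp (η ^ 2) * (1 - 2 * η ^ 2) * (1 - erf |η|)) *
        Real.exp (-2 * η ^ 2))) := by
  have hpair : Measure.map (fun ω => (X ω, Y ω)) P
      = (Measure.map X P).prod (Measure.map Y P) :=
    (indepFun_iff_map_prod_eq_prod_map_map hX.aemeasurable hY.aemeasurable).mp hindep
  have hsub : Measurable (fun p : ℝ × ℝ => p.1 - p.2) := measurable_fst.sub measurable_snd
  have hcomp : (fun ω => X ω - Y ω)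
      = (fun p : ℝ × ℝ => p.1 - p.2) ∘ (fun ω => (X ω, Y ω)) := rfl
  have hg0 : (fun x => ENNReal.ofReal
      (Set.indicator (Set.Ici (0 : ℝ)) (fun x => 4 * x * Real.exp (-2 * x ^ 2)) x)) = g0 := rfl
  rw [hcomp, ← Measure.map_map hsub (hX.prodMk hY), hpair, hXd, hYd, hg0, map_sub_prod]
  congr 1
  funext η
  exact lint_eq η
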